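/- Let p be a prime, let s be a finite index set, let f assign to each i ∈ s a polynomial f i ∈ (ZMod p)[X], and let z ≥ 1 be a natural number. Then the polynomial (gcd over i ∈ s of the f i) composed with X^z is a greatest common divisor of the family (f i composed with X^z) for i ∈ s; that is, Finset.gcd s (fun i => (f i).comp (X^z)) is associated to (Finset.gcd s f).comp (X^z) in (ZMod p)[X]. -/

import Mathlib

open Polynomial

private lemma comp_dvd_comp {p : ℕ} [Fact p.Prime] {a b q : Polynomial (ZMod p)}
    (h : a ∣ b) : a.comp q ∣ b.comp q := by
  obtain ⟨c, rfl⟩ := h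
  exact ⟨c.comp q, by rw [mul_comp]⟩

private lemma gcd_comp_pair {p : ℕ} [Fact p.Prime] (q x y : Polynomial (ZMod p)) :
    Associated (gcd (x.comp q) (y.comp q)) ((gcd x y).comp q) := by
  apply associated_of_dvd_dvd
  · have h1 : Associated (EuclideanDomain.gcd x y) (gcd x y) :=
      associated_of_dvd_dvd
        (dvd_gcd (EuclideanDomain.gcd_dvd_left _ _) (EuclideanDomain.gcd_dvd_right _ _))
        (EuclideanDomain.dvd_gcd (gcd_dvd_left _ _) (gcd_dvd_right _ _))
    obtain ⟨u, hu⟩ := h1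
    have key : gcd (x.comp q) (y.comp q) ∣ (EuclideanDomain.gcd x y).comp q := by
      rw [EuclideanDomain.gcd_eq_gcd_ab, add_comp, mul_comp, mul_comp]
      exact dvd_add (Dvd.dvd.mul_right (gcd_dvd_left _ _) _)
        (Dvd.dvd.mul_right (gcd_dvd_right _ _) _)
    have : (gcd x y).comp q = (EuclideanDomain.gcd x y).comp q * ((u : Polynomial (ZMod p)).comp q) := by
      rw [← mul_comp, hu]
    rw [this]
    exact key.mul_right _
  · exact dvd_gcd (comp_dvd_comp (gcd_dvd_left _ _)) (comp_dvd_comp (gcd_dvd_right _ _))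

/-- Over the field `ZMod p` (`p` prime), for a finite family of polynomials
`f i` and `z ≥ 1`, the gcd of the family `(f i).comp (X^z)` is associated to
`(gcd of the f i).comp (X^z)`. -/
theorem gcd_comp_pow (p : ℕ) [Fact p.Prime] {ι : Type*} (s : Finset ι)
    (f : ι → Polynomial (ZMod p)) (z : ℕ) (hz : 1 ≤ z) :
    Associated (s.gcd fun i => (f i).comp (X ^ z)) ((s.gcd f).comp (X ^ z)) := by
  classical
  induction s using Finset.induction_on with
  | empty => simp [Finset.gcd_empty]
  | insert a s hnotmem ih =>
    rw [Finset.gcd_insert, Finset.gcd_insert]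
    have h1 : Associated (gcd ((f a).comp (X ^ z)) (s.gcd fun i => (f i).comp (X ^ z)))
        (gcd ((f a).comp (X ^ z)) ((s.gcd f).comp (X ^ z))) :=
      associated_of_dvd_dvd
        (dvd_gcd (gcd_dvd_left _ _) ((gcd_dvd_right _ _).trans ih.dvd))
        (dvd_gcd (gcd_dvd_left _ _) ((gcd_dvd_right _ _).trans ih.symm.dvd))
    exact h1.trans (gcd_comp_pair _ _ _)
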